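/- For every symmetric matrix C ∈ 𝔽₂^{ℓ×ℓ} with zero diagonal, there exist an invertible lower-triangular matrix L ∈ 𝔽₂^{ℓ×ℓ} and a symmetric matrix B ∈ 𝔽₂^{ℓ×ℓ} with zero diagonal having at most a single 1 in each row and column, such that C = L B Lᵀ. -/

import Mathlib

open Matrix

namespace Stmt16Proof

open Finset

namespace Stmt16Aux

lemma zmod2_eq_one : ∀ {a : ZMod 2}, a ≠ 0 → a = 1 := by decide

lemma zmod2_add_self (a : ZMod 2) : a + a = 0 := by
  rw [← two_mul, show (2 : ZMod 2) = 0 by decide, zero_mul]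

lemma lowerTri_mul {n : ℕ} {A B : Matrix (Fin n) (Fin n) (ZMod 2)}
    (hA : ∀ i j, i < j → A i j = 0) (hB : ∀ i j, i < j → B i j = 0) :
    ∀ i j, i < j → (A * B) i j = 0 := by
  intro i j hij
  rw [Matrix.mul_apply]
  apply Finset.sum_eq_zero
  intro m _
  rcases lt_or_ge i m with h | h
  · rw [hA i m h, zero_mul]
  · rw [hB m j (lt_of_le_of_lt h hij), mul_zero]

lemma lowerTri_mul_diag {n : ℕ} {A B : Matrix (Fin n) (Fin n) (ZMod 2)}
    (hA : ∀ i j, i < j → A i j = 0) (hB : ∀ i j, i < j → B i j = 0) (i : Fin n) :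
    (A * B) i i = A i i * B i i := by
  rw [Matrix.mul_apply]
  apply Finset.sum_eq_single
  · intro m _ hm
    rcases lt_or_ge i m with h | h
    · rw [hA i m h, zero_mul]
    · rw [hB m i (lt_of_le_of_ne h hm), mul_zero]
  · intro h; exact absurd (Finset.mem_univ i) h

/-- The trivial case: C = 0. -/
lemma key_zero {n : ℕ} (C : Matrix (Fin n) (Fin n) (ZMod 2)) (hz : ∀ i j, C i j = 0) :
    ∃ L B : Matrix (Fin n) (Fin n) (ZMod 2),
      (∀ i j, i < j → L i j = 0) ∧ (∀ i, L i i = 1) ∧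
      Bᵀ = B ∧ (∀ i, B i i = 0) ∧
      (∀ i, (univ.filter (fun j => B i j ≠ 0)).card ≤ 1) ∧
      (∀ j, (univ.filter (fun i => B i j ≠ 0)).card ≤ 1) ∧
      C = L * B * Lᵀ ∧
      (∀ i, (∀ j, C i j = 0) → (∀ j, B i j = 0) ∧ (∀ j, L j i = if j = i then 1 else 0)) := by
  refine ⟨1, 0, ?_, ?_, ?_, ?_, ?_, ?_, ?_, ?_⟩
  · intro i j hij; exact Matrix.one_apply_ne (ne_of_lt hij)
  · intro i; exact Matrix.one_apply_eq i
  · simp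
  · simp [Matrix.zero_apply]
  · intro i; simp
  · intro j; simp
  · ext i j; simp [hz]
  · intro i _
    refine ⟨fun j => rfl, fun j => ?_⟩
    by_cases h : j = i
    · subst h; simp [Matrix.one_apply_eq]
    · simp [h, Matrix.one_apply_ne h]

end Stmt16Aux

namespace Stmt16Aux

open Classical in
set_option maxHeartbeats 4000000 in
lemma key : ∀ (n : ℕ) (ℓ : ℕ) (C : Matrix (Fin ℓ) (Fin ℓ) (ZMod 2)),
    (univ.filter (fun i => ∃ j, C i j ≠ 0)).card ≤ n → Cᵀ = C → (∀ i, C i i = 0) →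
    ∃ L B : Matrix (Fin ℓ) (Fin ℓ) (ZMod 2),
      (∀ i j, i < j → L i j = 0) ∧ (∀ i, L i i = 1) ∧
      Bᵀ = B ∧ (∀ i, B i i = 0) ∧
      (∀ i, (univ.filter (fun j => B i j ≠ 0)).card ≤ 1) ∧
      (∀ j, (univ.filter (fun i => B i j ≠ 0)).card ≤ 1) ∧
      C = L * B * Lᵀ ∧
      (∀ i, (∀ j, C i j = 0) → (∀ j, B i j = 0) ∧ (∀ j, L j i = if j = i then 1 else 0)) := by
  intro n
  induction n with
  | zero =>
    intro ℓ C hcard hsym hdiag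
    apply key_zero
    intro i j
    by_contra hne
    have hi : i ∈ univ.filter (fun i => ∃ j, C i j ≠ 0) := by
      simp only [mem_filter, mem_univ, true_and]; exact ⟨j, hne⟩
    have := Finset.card_pos.mpr ⟨i, hi⟩
    omega
  | succ n ih =>
    intro ℓ C hcard hsym hdiag
    by_cases hz : ∀ i j, C i j = 0
    · exact key_zero C hz
    -- symmetry as a pointwise fact
    have hs : ∀ a b, C a b = C b a := by
      intro a b
      have h := congrFun (congrFun hsym b) a
      rwa [Matrix.transpose_apply] at h
    -- the set of nonzero rows
    set S : Finset (Fin ℓ) := univ.filter (fun i => ∃ j, C i j ≠ 0) with hS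
    have hSne : S.Nonempty := by
      push_neg at hz
      obtain ⟨i, j, hij⟩ := hz
      exact ⟨i, by simp only [hS, mem_filter, mem_univ, true_and]; exact ⟨j, hij⟩⟩
    set i₀ : Fin ℓ := S.min' hSne with hi₀def
    have hi₀S : i₀ ∈ S := S.min'_mem hSne
    have hrow0 : ∀ j, j < i₀ → ∀ b, C j b = 0 := by
      intro j hj b
      by_contra hne
      have : j ∈ S := by simp only [hS, mem_filter, mem_univ, true_and]; exact ⟨b, hne⟩
      exact absurd (S.min'_le j this) (not_le.mpr hj)
    -- the pivot column k
    have hTne : (univ.filter (fun j => C i₀ j ≠ 0)).Nonempty := by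
      simp only [hS, mem_filter, mem_univ, true_and] at hi₀S
      obtain ⟨j, hj⟩ := hi₀S
      exact ⟨j, by simp only [mem_filter, mem_univ, true_and]; exact hj⟩
    set k : Fin ℓ := (univ.filter (fun j => C i₀ j ≠ 0)).min' hTne with hkdef
    have hkT : k ∈ univ.filter (fun j => C i₀ j ≠ 0) := Finset.min'_mem _ _
    have hCik : C i₀ k = 1 := by
      simp only [mem_filter, mem_univ, true_and] at hkT
      exact zmod2_eq_one hkT
    have hkmin : ∀ j, j < k → C i₀ j = 0 := by
      intro j hj
      by_contra hne
      have : j ∈ univ.filter (fun j => C i₀ j ≠ 0) := by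
        simp only [mem_filter, mem_univ, true_and]; exact hne
      exact absurd (Finset.min'_le _ j this) (not_le.mpr hj)
    have hik : i₀ < k := by
      rcases lt_trichotomy i₀ k with h | h | h
      · exact h
      · exfalso; rw [← h, hdiag] at hCik; exact one_ne_zero hCik.symm
      · exfalso
        have := hrow0 k h i₀
        rw [hs k i₀, hCik] at this
        exact one_ne_zero this
    have hini : i₀ ≠ k := ne_of_lt hik
    have hCki : C k i₀ = 1 := by rw [hs k i₀]; exact hCik
    have hCji : ∀ j, j < k → C j i₀ = 0 := fun j hj => by rw [hs j i₀]; exact hkmin j hj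
    -- the elimination matrix E = 1 + N
    set N : Matrix (Fin ℓ) (Fin ℓ) (ZMod 2) :=
      fun j m => if j = i₀ ∨ j = k then 0 else
        (if m = i₀ then C j k else 0) + (if m = k then C j i₀ else 0) with hNdef
    set E : Matrix (Fin ℓ) (Fin ℓ) (ZMod 2) := 1 + N with hEdef
    have hNle : ∀ a b, a ≤ b → N a b = 0 := by
      intro a b hab
      by_cases ha : a = i₀ ∨ a = k
      · simp only [hNdef, if_pos ha]
      · push_neg at ha
        simp only [hNdef, if_neg (not_or.mpr ha)]
        by_cases hb1 : b = i₀
        · subst hb1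
          rw [if_pos rfl, if_neg hini, hrow0 a (lt_of_le_of_ne hab ha.1) k]
          simp
        · by_cases hb2 : b = k
          · subst hb2
            rw [if_neg hb1, if_pos rfl, hCji a (lt_of_le_of_ne hab ha.2)]
            simp
          · rw [if_neg hb1, if_neg hb2]; simp
    have hNrow : ∀ b, N i₀ b = 0 ∧ N k b = 0 := by
      intro b; constructor <;> simp [hNdef]
    have hNN : N * N = 0 := by
      ext a b
      rw [Matrix.mul_apply, Matrix.zero_apply]
      apply Finset.sum_eq_zero
      intro m _
      by_cases hm : m = i₀ ∨ m = k
      · rcases hm with hm | hm <;> subst hm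
        · rw [(hNrow b).1, mul_zero]
        · rw [(hNrow b).2, mul_zero]
      · push_neg at hm
        have : N a m = 0 := by
          by_cases ha : a = i₀ ∨ a = k
          · simp [hNdef, ha]
          · simp [hNdef, ha, if_neg hm.1, if_neg hm.2]
        rw [this, zero_mul]
    have hEE : E * E = 1 := by
      have h2 : N + N = 0 := by ext a b; exact zmod2_add_self _
      rw [hEdef, add_mul, mul_add, mul_add, one_mul, one_mul, mul_one, hNN, add_zero,
        add_assoc, h2, add_zero]
    -- entrywise product formulas
    have h1 : ∀ a b, (N * C) a b =
        if a = i₀ ∨ a = k then 0 else C a k * C i₀ b + C a i₀ * C k b := by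
      intro a b
      rw [Matrix.mul_apply]
      by_cases ha : a = i₀ ∨ a = k
      · rw [if_pos ha]
        apply Finset.sum_eq_zero
        intro m _
        simp [hNdef, ha]
      · rw [if_neg ha]
        simp only [hNdef, if_neg ha, add_mul, ite_mul, zero_mul]
        rw [Finset.sum_add_distrib]
        congr 1 <;> simp
    have h2 : ∀ a b, (C * Nᵀ) a b =
        if b = i₀ ∨ b = k then 0 else C a i₀ * C b k + C a k * C b i₀ := by
      intro a b
      rw [Matrix.mul_apply]
      simp only [Matrix.transpose_apply]
      by_cases hb : b = i₀ ∨ b = k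
      · rw [if_pos hb]
        apply Finset.sum_eq_zero
        intro m _
        simp [hNdef, hb]
      · rw [if_neg hb]
        simp only [hNdef, if_neg hb, mul_add, mul_ite, mul_zero]
        rw [Finset.sum_add_distrib]
        congr 1 <;> simp
    have h3 : ∀ a b, (N * C * Nᵀ) a b =
        if a = i₀ ∨ a = k ∨ b = i₀ ∨ b = k then 0
        else C a i₀ * C b k + C a k * C b i₀ := by
      intro a b
      rw [Matrix.mul_apply]
      simp only [Matrix.transpose_apply, h1]
      by_cases ha : a = i₀ ∨ a = k
      · rw [if_pos (by tauto)]
        apply Finset.sum_eq_zero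
        intro m _
        rw [if_pos ha, zero_mul]
      · by_cases hb : b = i₀ ∨ b = k
        · rw [if_pos (by tauto)]
          apply Finset.sum_eq_zero
          intro m _
          have : N b m = 0 := by simp [hNdef, hb]
          rw [this, mul_zero]
        · rw [if_neg (by tauto)]
          simp only [if_neg ha, hNdef, if_neg hb, mul_add, mul_ite, mul_zero]
          rw [Finset.sum_add_distrib]
          have e1 : (∑ m, if m = i₀ then (C a k * C i₀ m + C a i₀ * C k m) * C b k else 0)
              = C a i₀ * C b k := by
            rw [Finset.sum_ite_eq' univ i₀ (fun m => (C a k * C i₀ m + C a i₀ * C k m) * C b k)]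
            rw [if_pos (mem_univ i₀), hdiag, hCki, mul_zero, zero_add, mul_one]
          have e2 : (∑ m, if m = k then (C a k * C i₀ m + C a i₀ * C k m) * C b i₀ else 0)
              = C a k * C b i₀ := by
            rw [Finset.sum_ite_eq' univ k (fun m => (C a k * C i₀ m + C a i₀ * C k m) * C b i₀)]
            rw [if_pos (mem_univ k), hdiag, hCik, mul_zero, add_zero, mul_one]
          rw [e1, e2]
    have hexp : E * C * Eᵀ = C + N * C + (C * Nᵀ + N * C * Nᵀ) := by
      rw [hEdef, Matrix.transpose_add, Matrix.transpose_one, add_mul, one_mul,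
        mul_add, mul_one, add_mul]
    have hC' : ∀ a b, (E * C * Eᵀ) a b =
        C a b + (if a = i₀ ∨ a = k then 0 else C a k * C i₀ b + C a i₀ * C k b)
        + ((if b = i₀ ∨ b = k then 0 else C a i₀ * C b k + C a k * C b i₀)
        + (if a = i₀ ∨ a = k ∨ b = i₀ ∨ b = k then 0
            else C a i₀ * C b k + C a k * C b i₀)) := by
      intro a b
      rw [hexp]
      simp only [Matrix.add_apply]
      rw [h1, h2, h3]
    -- facts about C' := E * C * Eᵀ
    have f_row_i₀ : ∀ b, (E * C * Eᵀ) i₀ b = if b = k then 1 else 0 := by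
      intro b
      rw [hC' i₀ b, if_pos (Or.inl rfl), if_pos (Or.inl rfl), add_zero, add_zero, hdiag,
        hCik, zero_mul, one_mul, zero_add]
      by_cases hb : b = i₀ ∨ b = k
      · rcases hb with hb | hb <;> subst hb
        · rw [if_pos (Or.inl rfl), add_zero, hdiag, if_neg hini]
        · rw [if_pos (Or.inr rfl), add_zero, hCik, if_pos rfl]
      · rw [if_neg hb, hs b i₀, zmod2_add_self]
        rw [if_neg (fun h => hb (Or.inr h))]
    have f_row_k : ∀ b, (E * C * Eᵀ) k b = if b = i₀ then 1 else 0 := by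
      intro b
      rw [hC' k b, if_pos (Or.inr rfl), if_pos (Or.inr (Or.inl rfl)), add_zero, add_zero,
        hCki, hdiag k, one_mul, zero_mul, add_zero]
      by_cases hb : b = i₀ ∨ b = k
      · rcases hb with hb | hb <;> subst hb
        · rw [if_pos (Or.inl rfl), add_zero, hCki, if_pos rfl]
        · rw [if_pos (Or.inr rfl), add_zero, hdiag, if_neg (Ne.symm hini)]
      · rw [if_neg hb, hs b k, zmod2_add_self]
        rw [if_neg (fun h => hb (Or.inl h))]
    have f_symm : (E * C * Eᵀ)ᵀ = E * C * Eᵀ := by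
      rw [Matrix.transpose_mul, Matrix.transpose_mul, Matrix.transpose_transpose, hsym,
        Matrix.mul_assoc]
    have f_s : ∀ a b, (E * C * Eᵀ) a b = (E * C * Eᵀ) b a := by
      intro a b
      have h := congrFun (congrFun f_symm b) a
      rwa [Matrix.transpose_apply] at h
    have hxy : ∀ x y : ZMod 2, x * y + y * x = 0 := by decide
    have f_diag : ∀ a, (E * C * Eᵀ) a a = 0 := by
      intro a
      rw [hC' a a, hdiag, hs i₀ a, hs k a,
        hxy (C a k) (C a i₀), hxy (C a i₀) (C a k)]
      simp
    have f_zero : ∀ j, (∀ b, C j b = 0) → ∀ b, (E * C * Eᵀ) j b = 0 := by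
      intro j hj b
      rw [hC' j b]
      simp [hj]
    -- the residual matrix D and the pair matrix P
    obtain ⟨D, hDab⟩ : ∃ D : Matrix (Fin ℓ) (Fin ℓ) (ZMod 2), ∀ a b,
        D a b = if a = i₀ ∨ a = k ∨ b = i₀ ∨ b = k then 0 else (E * C * Eᵀ) a b :=
      ⟨_, fun a b => rfl⟩
    obtain ⟨P, hPik⟩ : ∃ P : Matrix (Fin ℓ) (Fin ℓ) (ZMod 2), ∀ a b,
        P a b = if (a = i₀ ∧ b = k) ∨ (a = k ∧ b = i₀) then (1 : ZMod 2) else 0 :=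
      ⟨_, fun a b => rfl⟩
    have hPk : ∀ m, P m k = if m = i₀ then 1 else 0 := by
      intro m
      rw [hPik]
      by_cases h : m = i₀
      · rw [if_pos (Or.inl ⟨h, rfl⟩), if_pos h]
      · rw [if_neg, if_neg h]
        rintro (⟨h1, -⟩ | ⟨-, h2⟩)
        · exact h h1
        · exact hini h2.symm
    have hPi₀' : ∀ m, P m i₀ = if m = k then 1 else 0 := by
      intro m
      rw [hPik]
      by_cases h : m = k
      · rw [if_pos (Or.inr ⟨h, rfl⟩), if_pos h]
      · rw [if_neg, if_neg h]
        rintro (⟨-, h2⟩ | ⟨h1, -⟩)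
        · exact hini h2
        · exact h h1
    have hProw_i₀ : ∀ m, P i₀ m = if m = k then 1 else 0 := by
      intro m
      rw [hPik]
      by_cases h : m = k
      · rw [if_pos (Or.inl ⟨rfl, h⟩), if_pos h]
      · rw [if_neg, if_neg h]
        rintro (⟨-, h2⟩ | ⟨h1, -⟩)
        · exact h h2
        · exact hini h1
    have hProw_k : ∀ m, P k m = if m = i₀ then 1 else 0 := by
      intro m
      rw [hPik]
      by_cases h : m = i₀
      · rw [if_pos (Or.inr ⟨rfl, h⟩), if_pos h]
      · rw [if_neg, if_neg h]
        rintro (⟨h1, -⟩ | ⟨-, h2⟩)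
        · exact hini h1.symm
        · exact h h2
    have hPsym : ∀ a b, P a b = P b a := by
      intro a b
      rw [hPik, hPik]
      by_cases h : (a = i₀ ∧ b = k) ∨ (a = k ∧ b = i₀)
      · rw [if_pos h, if_pos (by tauto)]
      · rw [if_neg h, if_neg (by tauto)]
    have hDP : E * C * Eᵀ = D + P := by
      ext a b
      rw [Matrix.add_apply, hDab, hPik]
      by_cases ha1 : a = i₀
      · subst ha1
        rw [f_row_i₀ b, if_pos (Or.inl rfl), zero_add]
        by_cases hb : b = k
        · rw [if_pos hb, if_pos (Or.inl ⟨rfl, hb⟩)]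
        · rw [if_neg hb, if_neg]
          rintro (⟨-, h⟩ | ⟨h, -⟩)
          · exact hb h
          · exact hini h
      · by_cases ha2 : a = k
        · subst ha2
          rw [f_row_k b, if_pos (Or.inr (Or.inl rfl)), zero_add]
          by_cases hb : b = i₀
          · rw [if_pos hb, if_pos (Or.inr ⟨rfl, hb⟩)]
          · rw [if_neg hb, if_neg]
            rintro (⟨h, -⟩ | ⟨-, h⟩)
            · exact hini h.symm
            · exact hb h
        · by_cases hb1 : b = i₀
          · subst hb1
            rw [if_pos (Or.inr (Or.inr (Or.inl rfl))), zero_add, f_s a i₀, f_row_i₀ a,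
              if_neg ha2, if_neg]
            rintro (⟨-, h⟩ | ⟨h, -⟩)
            · exact hini h
            · exact ha2 h
          · by_cases hb2 : b = k
            · subst hb2
              rw [if_pos (Or.inr (Or.inr (Or.inr rfl))), zero_add, f_s a k, f_row_k a,
                if_neg ha1, if_neg]
              rintro (⟨h, -⟩ | ⟨-, h⟩)
              · exact ha1 h
              · exact hini h.symm
            · rw [if_neg (by tauto), if_neg (by tauto), add_zero]
    have hDsym : Dᵀ = D := by
      ext a b
      rw [Matrix.transpose_apply, hDab, hDab]
      by_cases hc : a = i₀ ∨ a = k ∨ b = i₀ ∨ b = k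
      · rw [if_pos (by tauto), if_pos (by tauto)]
      · rw [if_neg (by tauto), if_neg (by tauto), f_s b a]
    have hDdiag : ∀ a, D a a = 0 := by
      intro a
      rw [hDab]
      by_cases hc : a = i₀ ∨ a = k ∨ a = i₀ ∨ a = k
      · rw [if_pos hc]
      · rw [if_neg hc, f_diag]
    have hDi₀ : ∀ b, D i₀ b = 0 := fun b => by rw [hDab, if_pos (Or.inl rfl)]
    have hDk : ∀ b, D k b = 0 := fun b => by rw [hDab, if_pos (Or.inr (Or.inl rfl))]
    have hDzeroC : ∀ j, (∀ b, C j b = 0) → ∀ b, D j b = 0 := by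
      intro j hj b
      rw [hDab]
      by_cases hc : j = i₀ ∨ j = k ∨ b = i₀ ∨ b = k
      · rw [if_pos hc]
      · rw [if_neg hc, f_zero j hj]
    have hcardD : (univ.filter (fun i => ∃ j, D i j ≠ 0)).card ≤ n := by
      have hsub : univ.filter (fun i => ∃ j, D i j ≠ 0) ⊆ S.erase i₀ := by
        intro i hi
        simp only [mem_filter, mem_univ, true_and] at hi
        obtain ⟨j, hj⟩ := hi
        rw [Finset.mem_erase]
        constructor
        · rintro rfl; exact hj (hDi₀ j)
        · simp only [hS, mem_filter, mem_univ, true_and]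
          by_contra hcon
          push_neg at hcon
          exact hj (hDzeroC i hcon j)
      have h1' := Finset.card_le_card hsub
      rw [Finset.card_erase_of_mem hi₀S] at h1'
      omega
    obtain ⟨L₁, B₁, hL₁lt, hL₁diag, hB₁sym, hB₁diag, hB₁row, hB₁col, hDeq, hX⟩ :=
      ih ℓ D hcardD hDsym hDdiag
    obtain ⟨hBi₀, hLi₀⟩ := hX i₀ hDi₀
    obtain ⟨hBk, hLk⟩ := hX k hDk
    have hB₁s : ∀ a b, B₁ a b = B₁ b a := by
      intro a b
      have h := congrFun (congrFun hB₁sym b) a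
      rwa [Matrix.transpose_apply] at h
    have hLP : L₁ * P = P := by
      ext a b
      rw [Matrix.mul_apply]
      by_cases hb1 : b = k
      · subst hb1
        simp only [hPk, mul_ite, mul_one, mul_zero]
        rw [Finset.sum_ite_eq' univ i₀ (fun m => L₁ a m), if_pos (mem_univ i₀), hLi₀ a]
      · by_cases hb2 : b = i₀
        · subst hb2
          simp only [hPi₀', mul_ite, mul_one, mul_zero]
          rw [Finset.sum_ite_eq' univ k (fun m => L₁ a m), if_pos (mem_univ k), hLk a]
        · have hPb : ∀ m, P m b = 0 := by
            intro m
            rw [hPik, if_neg]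
            rintro (⟨-, h⟩ | ⟨-, h⟩)
            · exact hb1 h
            · exact hb2 h
          simp only [hPb, mul_zero]
          rw [Finset.sum_const_zero]
    have hPL : P * L₁ᵀ = P := by
      ext a b
      rw [Matrix.mul_apply]
      simp only [Matrix.transpose_apply]
      by_cases ha1 : a = i₀
      · subst ha1
        simp only [hProw_i₀, ite_mul, one_mul, zero_mul]
        rw [Finset.sum_ite_eq' univ k (fun m => L₁ b m), if_pos (mem_univ k), hLk b]
      · by_cases ha2 : a = k
        · subst ha2
          simp only [hProw_k, ite_mul, one_mul, zero_mul]
          rw [Finset.sum_ite_eq' univ i₀ (fun m => L₁ b m), if_pos (mem_univ i₀), hLi₀ b]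
        · have hPa : ∀ m, P a m = 0 := by
            intro m
            rw [hPik, if_neg]
            rintro (⟨h, -⟩ | ⟨h, -⟩)
            · exact ha1 h
            · exact ha2 h
          simp only [hPa, zero_mul]
          rw [Finset.sum_const_zero]
    have hElt : ∀ i j, i < j → E i j = 0 := by
      intro i j hij
      rw [hEdef, Matrix.add_apply, Matrix.one_apply_ne (ne_of_lt hij),
        hNle i j (le_of_lt hij), add_zero]
    have hEdiag : ∀ i, E i i = 1 := by
      intro i
      rw [hEdef, Matrix.add_apply, Matrix.one_apply_eq, hNle i i le_rfl, add_zero]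
    have hPdiagzero : ∀ i, P i i = 0 := by
      intro i
      rw [hPik, if_neg]
      rintro (⟨h1, h2⟩ | ⟨h1, h2⟩)
      · exact hini (h1.symm.trans h2)
      · exact hini (h2.symm.trans h1)
    refine ⟨E * L₁, B₁ + P, ?_, ?_, ?_, ?_, ?_, ?_, ?_, ?_⟩
    · exact lowerTri_mul hElt hL₁lt
    · intro i
      rw [lowerTri_mul_diag hElt hL₁lt i, hEdiag i, hL₁diag i, one_mul]
    · ext a b
      rw [Matrix.transpose_apply, Matrix.add_apply, Matrix.add_apply, hB₁s b a, hPsym b a]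
    · intro i
      rw [Matrix.add_apply, hB₁diag i, hPdiagzero i, add_zero]
    · intro i
      by_cases hi1 : i = i₀
      · subst hi1
        have hval : ∀ j, (B₁ + P) i₀ j = if j = k then 1 else 0 := by
          intro j
          rw [Matrix.add_apply, hBi₀ j, zero_add, hProw_i₀ j]
        calc (univ.filter (fun j => (B₁ + P) i₀ j ≠ 0)).card
            ≤ ({k} : Finset (Fin ℓ)).card := by
              apply Finset.card_le_card
              intro j hj
              simp only [mem_filter, mem_univ, true_and, hval] at hj
              rw [Finset.mem_singleton]
              by_contra hc
              rw [if_neg hc] at hj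
              exact hj rfl
          _ = 1 := Finset.card_singleton k
      · by_cases hi2 : i = k
        · subst hi2
          have hval : ∀ j, (B₁ + P) k j = if j = i₀ then 1 else 0 := by
            intro j
            rw [Matrix.add_apply, hBk j, zero_add, hProw_k j]
          calc (univ.filter (fun j => (B₁ + P) k j ≠ 0)).card
              ≤ ({i₀} : Finset (Fin ℓ)).card := by
                apply Finset.card_le_card
                intro j hj
                simp only [mem_filter, mem_univ, true_and, hval] at hj
                rw [Finset.mem_singleton]
                by_contra hc
                rw [if_neg hc] at hj
                exact hj rfl
            _ = 1 := Finset.card_singleton i₀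
        · have hval : ∀ j, (B₁ + P) i j = B₁ i j := by
            intro j
            rw [Matrix.add_apply, hPik, if_neg (by tauto), add_zero]
          have : univ.filter (fun j => (B₁ + P) i j ≠ 0)
              = univ.filter (fun j => B₁ i j ≠ 0) :=
            Finset.filter_congr (fun j _ => by rw [hval j])
          rw [this]
          exact hB₁row i
    · intro j
      by_cases hj1 : j = i₀
      · subst hj1
        have hval : ∀ i, (B₁ + P) i i₀ = if i = k then 1 else 0 := by
          intro i
          rw [Matrix.add_apply, hB₁s i i₀, hBi₀ i, zero_add, hPi₀' i]
        calc (univ.filter (fun i => (B₁ + P) i i₀ ≠ 0)).card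
            ≤ ({k} : Finset (Fin ℓ)).card := by
              apply Finset.card_le_card
              intro i hi
              simp only [mem_filter, mem_univ, true_and, hval] at hi
              rw [Finset.mem_singleton]
              by_contra hc
              rw [if_neg hc] at hi
              exact hi rfl
          _ = 1 := Finset.card_singleton k
      · by_cases hj2 : j = k
        · subst hj2
          have hval : ∀ i, (B₁ + P) i k = if i = i₀ then 1 else 0 := by
            intro i
            rw [Matrix.add_apply, hB₁s i k, hBk i, zero_add, hPk i]
          calc (univ.filter (fun i => (B₁ + P) i k ≠ 0)).card
              ≤ ({i₀} : Finset (Fin ℓ)).card := by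
                apply Finset.card_le_card
                intro i hi
                simp only [mem_filter, mem_univ, true_and, hval] at hi
                rw [Finset.mem_singleton]
                by_contra hc
                rw [if_neg hc] at hi
                exact hi rfl
            _ = 1 := Finset.card_singleton i₀
        · have hval : ∀ i, (B₁ + P) i j = B₁ i j := by
            intro i
            rw [Matrix.add_apply, hPik, if_neg (by tauto), add_zero]
          have : univ.filter (fun i => (B₁ + P) i j ≠ 0)
              = univ.filter (fun i => B₁ i j ≠ 0) :=
            Finset.filter_congr (fun i _ => by rw [hval i])
          rw [this]
          exact hB₁col j
    · -- the factorization
      have hmid : L₁ * (B₁ + P) * L₁ᵀ = D + P := by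
        rw [mul_add, add_mul, hLP, hPL, ← hDeq]
      have hET : Eᵀ * Eᵀ = 1 := by
        rw [← Matrix.transpose_mul, hEE, Matrix.transpose_one]
      have hcalc : E * L₁ * (B₁ + P) * (L₁ᵀ * Eᵀ) = C := by
        calc E * L₁ * (B₁ + P) * (L₁ᵀ * Eᵀ)
            = E * (L₁ * (B₁ + P) * L₁ᵀ) * Eᵀ := by
              simp only [Matrix.mul_assoc]
          _ = E * (D + P) * Eᵀ := by rw [hmid]
          _ = E * (E * C * Eᵀ) * Eᵀ := by rw [hDP]
          _ = E * E * C * (Eᵀ * Eᵀ) := by simp only [Matrix.mul_assoc]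
          _ = C := by rw [hEE, hET, one_mul, mul_one]
      rw [Matrix.transpose_mul, ← hcalc]
    · intro i hi
      have hii₀ : i ≠ i₀ := by
        rintro rfl
        exact one_ne_zero (hCik ▸ hi k)
      have hiik : i ≠ k := by
        rintro rfl
        exact one_ne_zero (hCki ▸ hi i₀)
      obtain ⟨hB₁i, hL₁i⟩ := hX i (hDzeroC i hi)
      constructor
      · intro j
        rw [Matrix.add_apply, hB₁i j, zero_add, hPik, if_neg (by tauto)]
      · intro j
        rw [Matrix.mul_apply]
        have hsum : ∑ m, E j m * L₁ m i = E j i := by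
          simp only [hL₁i, mul_ite, mul_one, mul_zero]
          rw [Finset.sum_ite_eq' univ i (fun m => E j m), if_pos (mem_univ i)]
        rw [hsum, hEdef, Matrix.add_apply]
        have hNji : N j i = 0 := by
          by_cases hj : j = i₀ ∨ j = k
          · simp [hNdef, hj]
          · simp [hNdef, hj, hii₀, hiik]
        rw [hNji, add_zero, Matrix.one_apply]

end Stmt16Aux

end Stmt16Proof

open Finset in
theorem stmt_16 (ℓ : ℕ) (C : Matrix (Fin ℓ) (Fin ℓ) (ZMod 2))
    (hsymm : Cᵀ = C) (hdiag : ∀ i, C i i = 0) :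
    ∃ L B : Matrix (Fin ℓ) (Fin ℓ) (ZMod 2),
      (∀ i j, i < j → L i j = 0) ∧ IsUnit L ∧
      Bᵀ = B ∧ (∀ i, B i i = 0) ∧
      (∀ i, (Finset.univ.filter (fun j => B i j ≠ 0)).card ≤ 1) ∧
      (∀ j, (Finset.univ.filter (fun i => B i j ≠ 0)).card ≤ 1) ∧
      C = L * B * Lᵀ := by
  classical
  obtain ⟨L, B, hLlt, hLdiag, hBsym, hBdiag, hBrow, hBcol, hfac, -⟩ :=
    Stmt16Proof.Stmt16Aux.key (univ.filter (fun i => ∃ j, C i j ≠ 0)).card ℓ C le_rfl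
      hsymm hdiag
  refine ⟨L, B, hLlt, ?_, hBsym, hBdiag, hBrow, hBcol, hfac⟩
  apply (Matrix.isUnit_iff_isUnit_det L).mpr
  rw [Matrix.det_of_lowerTriangular L hLlt]
  simp [hLdiag]
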